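/- Let P be a symmetric positive definite n×n real matrix, s > 0, ū > 0, and h ∈ ℝⁿ. Then the ellipsoid {x ∈ ℝⁿ : xᵀPx ≤ s²} is contained in the slab {x ∈ ℝⁿ : |hᵀx| ≤ ū} if and only if s²·(hᵀP⁻¹h) ≤ ū². -/

import Mathlib

open Matrix

lemma sym_dot (n : ℕ) (P : Matrix (Fin n) (Fin n) ℝ) (hP : P.IsHermitian)
    (x y : Fin n → ℝ) : x ⬝ᵥ P *ᵥ y = y ⬝ᵥ P *ᵥ x := by
  have hPt : Pᵀ = P := by simpa using hP.eq
  rw [Matrix.dotProduct_mulVec, ← Matrix.mulVec_transpose, hPt, dotProduct_comm]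

/-- For a symmetric positive definite `P`, `s > 0`, `ū > 0` and `h ∈ ℝⁿ`,
the ellipsoid `{x : xᵀPx ≤ s²}` is contained in the slab `{x : |hᵀx| ≤ ū}` iff
`s²·(hᵀP⁻¹h) ≤ ū²`. -/
theorem ellipsoid_subset_slab_iff (n : ℕ) (P : Matrix (Fin n) (Fin n) ℝ)
    (hP : P.PosDef) (s ubar : ℝ) (hs : 0 < s) (hubar : 0 < ubar) (h : Fin n → ℝ) :
    {x : Fin n → ℝ | x ⬝ᵥ P *ᵥ x ≤ s ^ 2} ⊆ {x : Fin n → ℝ | |h ⬝ᵥ x| ≤ ubar} ↔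
      s ^ 2 * (h ⬝ᵥ P⁻¹ *ᵥ h) ≤ ubar ^ 2 := by
  have hPinv : (P⁻¹).PosDef := hP.inv
  have hPP : P * P⁻¹ = 1 := Matrix.mul_nonsing_inv P (isUnit_iff_ne_zero.mpr hP.det_pos.ne')
  set a : ℝ := h ⬝ᵥ P⁻¹ *ᵥ h with ha
  have hPinvh : P *ᵥ (P⁻¹ *ᵥ h) = h := by
    rw [Matrix.mulVec_mulVec, hPP, Matrix.one_mulVec]
  constructor
  · intro hsub
    rcases eq_or_ne h 0 with rfl | hne
    · simp [ha, zero_dotProduct]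
      positivity
    · have hapos : 0 < a := by
        have := hPinv.dotProduct_mulVec_pos hne
        simpa [ha, dotProduct, star] using this
      set c : ℝ := s / Real.sqrt a with hc
      have hcpos : 0 < c := div_pos hs (Real.sqrt_pos.mpr hapos)
      have hc2 : c ^ 2 * a = s ^ 2 := by
        rw [hc, div_pow, Real.sq_sqrt hapos.le, div_mul_cancel₀ _ hapos.ne']
      set x : Fin n → ℝ := c • (P⁻¹ *ᵥ h) with hx
      have hxP : x ⬝ᵥ P *ᵥ x = s ^ 2 := by
        rw [hx, Matrix.mulVec_smul, dotProduct_smul, smul_dotProduct,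
          hPinvh, smul_eq_mul, smul_eq_mul, dotProduct_comm]
        rw [← ha]; linear_combination hc2
      have hxmem : x ∈ {x : Fin n → ℝ | x ⬝ᵥ P *ᵥ x ≤ s ^ 2} := le_of_eq hxP
      have habs : |h ⬝ᵥ x| ≤ ubar := hsub hxmem
      have hhx : h ⬝ᵥ x = c * a := by
        rw [hx, dotProduct_smul, smul_eq_mul, ha]
      rw [hhx, abs_of_pos (by positivity)] at habs
      nlinarith [hc2, habs, hapos, mul_le_mul habs habs (mul_nonneg hcpos.le hapos.le) hubar.le]
  · intro hle x hxmem
    have hxP : x ⬝ᵥ P *ᵥ x ≤ s ^ 2 := hxmem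
    -- Cauchy-Schwarz: (h ⬝ᵥ x)^2 ≤ a * (x ⬝ᵥ P *ᵥ x)
    set y : Fin n → ℝ := P⁻¹ *ᵥ h with hy
    have hByy : y ⬝ᵥ P *ᵥ y = a := by
      rw [hy, hPinvh, dotProduct_comm, ha]
    have hByx : y ⬝ᵥ P *ᵥ x = h ⬝ᵥ x := by
      rw [sym_dot n P hP.1, hy, hPinvh, dotProduct_comm]
    have hquad : ∀ t : ℝ, 0 ≤ a * (t * t) + (2 * (h ⬝ᵥ x)) * t + x ⬝ᵥ P *ᵥ x := by
      intro t
      have := hP.posSemidef.dotProduct_mulVec_nonneg (t • y + x)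
      have hexp : (t • y + x) ⬝ᵥ P *ᵥ (t • y + x)
          = a * (t * t) + (2 * (h ⬝ᵥ x)) * t + x ⬝ᵥ P *ᵥ x := by
        simp only [Matrix.mulVec_add, Matrix.mulVec_smul, add_dotProduct,
          dotProduct_add, smul_dotProduct, dotProduct_smul,
          smul_eq_mul]
        rw [sym_dot n P hP.1 x y, hByy, hByx]
        ring
      simp only [star_trivial, hexp] at this
      exact this
    have hdisc := discrim_le_zero hquad
    rw [discrim] at hdisc
    have hcs : (h ⬝ᵥ x) ^ 2 ≤ a * (x ⬝ᵥ P *ᵥ x) := by nlinarith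
    have hanon : 0 ≤ a := by
      have := hPinv.posSemidef.dotProduct_mulVec_nonneg h
      simpa [ha, star] using this
    have : (h ⬝ᵥ x) ^ 2 ≤ ubar ^ 2 := by nlinarith
    exact abs_le_of_sq_le_sq this hubar.le
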